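/- Let n ≥ 1, S = ℚ[x_1,…,x_n], and let M_n ⊆ S^{n+1} be the spline module of the fan P_2(A_n). Then M_n is a free S-module of rank n + 1 admitting a basis consisting of homogeneous elements of degrees exactly 0, 1, 2, …, n (one basis element of each degree). Consequently, as an S-module, the rational equivariant Chow cohomology A*_T(X_{P_2(A_n)})_ℚ ≅ C^0(P_2(A_n)) is isomorphic to ⊕_{i=0}^{n} S(−i). -/

import Mathlib

open MvPolynomial

/-- The ring `S = ℚ[x_1,…,x_n]`. -/
abbrev S (n : ℕ) : Type := MvPolynomial (Fin n) ℚ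

/-- The Billera–Rose spline module `M_n = C^0(P_2(A_n)) ⊆ S^{n+1}`: tuples
`(f_0, f_1, …, f_n)` with `x_i ∣ f_0 - f_i` for `1 ≤ i ≤ n` and
`x_i - x_j ∣ f_i - f_j` for `1 ≤ i < j ≤ n`. -/
noncomputable def splineModule (n : ℕ) : Submodule (S n) (Fin (n + 1) → S n) where
  carrier := {f | (∀ i : Fin n, X i ∣ f 0 - f i.succ) ∧
    ∀ i j : Fin n, i < j → (X i - X j) ∣ f i.succ - f j.succ}
  add_mem' := by
    rintro a b ⟨ha1, ha2⟩ ⟨hb1, hb2⟩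
    refine ⟨fun i => ?_, fun i j hij => ?_⟩
    · simpa [sub_add_sub_comm] using dvd_add (ha1 i) (hb1 i)
    · simpa [sub_add_sub_comm] using dvd_add (ha2 i j hij) (hb2 i j hij)
  zero_mem' := by
    refine ⟨fun i => ?_, fun i j _ => ?_⟩ <;> simp
  smul_mem' := by
    rintro c f ⟨h1, h2⟩
    refine ⟨fun i => ?_, fun i j hij => ?_⟩
    · simpa [smul_eq_mul, mul_sub] using (h1 i).mul_left c
    · simpa [smul_eq_mul, mul_sub] using (h2 i j hij).mul_left c

-- prime lemmas
lemma mv_prime_X0 {m : ℕ} : Prime (X (0 : Fin (m+1)) : MvPolynomial (Fin (m+1)) ℚ) := by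
  rw [← MulEquiv.prime_iff (finSuccEquiv ℚ m).toMulEquiv]
  have : (finSuccEquiv ℚ m).toMulEquiv (X 0) = Polynomial.X := finSuccEquiv_X_zero
  rw [this]
  exact Polynomial.prime_X

lemma mv_prime_X0_sub {m : ℕ} (j : Fin (m+1)) (hj : j ≠ 0) :
    Prime (X 0 - X j : MvPolynomial (Fin (m+1)) ℚ) := by
  rw [← MulEquiv.prime_iff (finSuccEquiv ℚ m).toMulEquiv]
  obtain ⟨t, rfl⟩ : ∃ t : Fin m, t.succ = j := ⟨j.pred hj, Fin.succ_pred j hj⟩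
  have : (finSuccEquiv ℚ m).toMulEquiv (X 0 - X t.succ)
      = Polynomial.X - Polynomial.C (X t) := by
    show (finSuccEquiv ℚ m) (X 0 - X t.succ) = _
    rw [map_sub, finSuccEquiv_X_zero, finSuccEquiv_X_succ]
  rw [this]
  exact Polynomial.prime_X_sub_C _

lemma mv_prime_X {n : ℕ} (i : Fin n) : Prime (X i : MvPolynomial (Fin n) ℚ) := by
  cases n with
  | zero => exact i.elim0
  | succ m =>
    have h0 := mv_prime_X0 (m := m)
    have := (MulEquiv.prime_iff (renameEquiv ℚ (Equiv.swap (0 : Fin (m+1)) i)).toMulEquiv).mpr h0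
    simpa [renameEquiv_apply, rename_X, Equiv.swap_apply_left] using this

lemma mv_prime_X_sub {n : ℕ} {i j : Fin n} (hij : i ≠ j) :
    Prime (X i - X j : MvPolynomial (Fin n) ℚ) := by
  cases n with
  | zero => exact i.elim0
  | succ m =>
    set j' : Fin (m+1) := Equiv.swap (0 : Fin (m+1)) i j with hj'
    have hj'0 : j' ≠ 0 := by
      intro h
      apply hij
      have := congrArg (Equiv.swap (0 : Fin (m+1)) i) h
      simpa [hj', Equiv.swap_apply_self, Equiv.swap_apply_left] using this.symm
    have h0 := mv_prime_X0_sub j' hj'0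
    have := (MulEquiv.prime_iff (renameEquiv ℚ (Equiv.swap (0 : Fin (m+1)) i)).toMulEquiv).mpr h0
    simpa [renameEquiv_apply, rename_X, Equiv.swap_apply_left, hj',
      Equiv.swap_apply_self] using this

lemma newton_interp {R : Type*} [CommRing R] : ∀ (m : ℕ) (p f : Fin (m+1) → R)
    (_ : ∀ i j k : Fin (m+1), i ≠ j → i ≠ k → j ≠ k → ∀ h : R,
      (p i - p j) ∣ (p i - p k) * h → (p i - p j) ∣ h)
    (_ : ∀ i j, (p i - p j) ∣ (f i - f j)),
    ∃ g : Polynomial R, g.natDegree ≤ m ∧ ∀ j, Polynomial.eval (p j) g = f j := by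
  intro m
  induction m with
  | zero =>
    intro p f _ _
    refine ⟨Polynomial.C (f 0), by simp, fun j => ?_⟩
    have : j = 0 := Fin.fin_one_eq_zero j
    subst this; simp
  | succ m ih =>
    intro p f H hf
    choose d hdspec using fun i : Fin (m+1) =>
      (hf i.succ 0 : (p i.succ - p 0) ∣ (f i.succ - f 0))
    have hdvd : ∀ i j : Fin (m+1), ((p ∘ Fin.succ) i - (p ∘ Fin.succ) j) ∣ (d i - d j) := by
      intro i j
      rcases eq_or_ne i j with rfl | hij
      · simp
      have key : (p i.succ - p 0) * (d i - d j)
          = (f i.succ - f j.succ) - (p i.succ - p j.succ) * d j := by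
        have e1 := hdspec i; have e2 := hdspec j
        have h3 : f i.succ - f j.succ = (f i.succ - f 0) - (f j.succ - f 0) := by ring
        rw [h3, e1, e2]; ring
      have h1 : (p i.succ - p j.succ) ∣ (p i.succ - p 0) * (d i - d j) := by
        rw [key]
        exact dvd_sub (hf _ _) (dvd_mul_right _ _)
      exact H i.succ j.succ 0 (fun h => hij (Fin.succ_injective _ h))
        (Fin.succ_ne_zero i) (Fin.succ_ne_zero j) _ h1
    obtain ⟨h, hdeg, heval⟩ := ih (p ∘ Fin.succ) d
      (fun i j k hij hik hjk => H i.succ j.succ k.succ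
        (fun h => hij (Fin.succ_injective _ h))
        (fun h => hik (Fin.succ_injective _ h))
        (fun h => hjk (Fin.succ_injective _ h)))
      hdvd
    refine ⟨Polynomial.C (f 0) + (Polynomial.X - Polynomial.C (p 0)) * h, ?_, ?_⟩
    · refine (Polynomial.natDegree_add_le _ _).trans ?_
      have h2 : ((Polynomial.X - Polynomial.C (p 0)) * h).natDegree ≤ 1 + m :=
        (Polynomial.natDegree_mul_le).trans
          (add_le_add (Polynomial.natDegree_X_sub_C_le _) hdeg)
      simp only [Polynomial.natDegree_C]
      omega
    · intro j
      induction j using Fin.cases with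
      | zero => simp
      | succ i =>
        have hi := heval i
        simp only [Function.comp_apply] at hi
        simp only [Polynomial.eval_add, Polynomial.eval_C, Polynomial.eval_mul,
          Polynomial.eval_sub, Polynomial.eval_X, hi]
        rw [show f i.succ = f 0 + (f i.succ - f 0) by ring, hdspec i]

/-- The points `0, x_1, …, x_n`. -/
noncomputable def pts (n : ℕ) : Fin (n+1) → S n := Fin.cases 0 fun i => X i

@[simp] lemma pts_zero (n : ℕ) : pts n 0 = 0 := rfl
@[simp] lemma pts_succ (n : ℕ) (i : Fin n) : pts n i.succ = X i := rfl

lemma pts_injective (n : ℕ) : Function.Injective (pts n) := by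
  intro x y hxy
  induction x using Fin.cases with
  | zero =>
    induction y using Fin.cases with
    | zero => rfl
    | succ t => simp only [pts_zero, pts_succ] at hxy; exact absurd hxy.symm (X_ne_zero t)
  | succ s =>
    induction y using Fin.cases with
    | zero => simp only [pts_zero, pts_succ] at hxy; exact absurd hxy (X_ne_zero s)
    | succ t =>
      simp only [pts_succ] at hxy
      exact congrArg Fin.succ (X_injective hxy)

lemma pts_prime_sub (n : ℕ) {i j : Fin (n+1)} (hij : i ≠ j) :
    Prime (pts n i - pts n j) := by
  induction i using Fin.cases with
  | zero =>
    induction j using Fin.cases with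
    | zero => exact absurd rfl hij
    | succ t =>
      simp only [pts_zero, pts_succ, zero_sub]
      exact (mv_prime_X t).neg
  | succ s =>
    induction j using Fin.cases with
    | zero => simpa using mv_prime_X s
    | succ t =>
      have hst : s ≠ t := fun h => hij (congrArg Fin.succ h)
      simpa using mv_prime_X_sub hst
lemma pts_not_dvd (n : ℕ) {i j k : Fin (n+1)} (hik : i ≠ k) (hjk : j ≠ k) :
    ¬ (pts n i - pts n j) ∣ (pts n i - pts n k) := by
  intro hdvd
  classical
  set v : Fin n → ℚ := fun s => if s.succ = k ∨ k = 0 then 1 else 0 with hv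
  have hev : ∀ l : Fin (n+1), l ≠ k → eval v (pts n l) = if k = 0 then 1 else 0 := by
    intro l hl
    induction l using Fin.cases with
    | zero =>
      have hk0 : k ≠ 0 := Ne.symm hl
      simp [hk0]
    | succ t =>
      simp only [pts_succ, eval_X, hv]
      by_cases hk0 : k = 0
      · simp [hk0]
      · simp [hl, hk0]
  have hevk : eval v (pts n k) = if k = 0 then 0 else 1 := by
    induction k using Fin.cases with
    | zero => simp
    | succ t => simp [hv, Fin.succ_ne_zero]
  obtain ⟨c, hc⟩ := hdvd
  have hee := congrArg (eval v) hc
  simp only [map_sub, map_mul] at hee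
  rw [hev i hik, hev j hjk, hevk] at hee
  rcases eq_or_ne k 0 with rfl | h0 <;> simp_all

lemma pts_H (n : ℕ) : ∀ i j k : Fin (n+1), i ≠ j → i ≠ k → j ≠ k → ∀ h : S n,
    (pts n i - pts n j) ∣ (pts n i - pts n k) * h → (pts n i - pts n j) ∣ h := by
  intro i j k hij hik hjk h hdvd
  exact ((pts_prime_sub n hij).2.2 _ _ hdvd).resolve_left (pts_not_dvd n hik hjk)

/-- The candidate basis map. -/
noncomputable def Phi (n : ℕ) : (Fin (n+1) → S n) →ₗ[S n] (Fin (n+1) → S n) where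
  toFun a := fun j => ∑ k : Fin (n+1), a k * pts n j ^ (k : ℕ)
  map_add' a b := by
    funext j
    simp [add_mul, Finset.sum_add_distrib]
  map_smul' c a := by
    funext j
    simp [Finset.mul_sum, smul_eq_mul, mul_assoc]

lemma Phi_mem (n : ℕ) (a : Fin (n+1) → S n) : Phi n a ∈ splineModule n := by
  constructor
  · intro i
    show X i ∣ (∑ k : Fin (n+1), a k * pts n 0 ^ (k:ℕ)) - ∑ k : Fin (n+1), a k * pts n i.succ ^ (k:ℕ)
    rw [← Finset.sum_sub_distrib]
    refine Finset.dvd_sum fun k _ => ?_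
    rw [← mul_sub]
    refine Dvd.dvd.mul_left ?_ _
    simp only [pts_zero, pts_succ]
    rcases Nat.eq_zero_or_pos (k : ℕ) with h | h
    · simp [h]
    · obtain ⟨s, hs⟩ := Nat.exists_eq_succ_of_ne_zero h.ne'
      rw [hs]
      simp only [zero_pow (Nat.succ_ne_zero s), zero_sub, dvd_neg]
      exact dvd_pow_self _ (Nat.succ_ne_zero s)
  · intro i j _
    show (X i - X j) ∣ (∑ k : Fin (n+1), a k * pts n i.succ ^ (k:ℕ))
        - ∑ k : Fin (n+1), a k * pts n j.succ ^ (k:ℕ)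
    rw [← Finset.sum_sub_distrib]
    refine Finset.dvd_sum fun k _ => ?_
    rw [← mul_sub]
    exact Dvd.dvd.mul_left (by simpa using sub_dvd_pow_sub_pow (X i) (X j) (k:ℕ)) _

/-- **Theorem**: `C^0(P_2(A_n))` is a free `S`-module of rank `n+1` with a basis of
homogeneous elements of degrees exactly `0, 1, …, n` (one of each degree); hence as an
`S`-module the equivariant Chow cohomology
`A^*_T(X_{P₂(Aₙ)})_ℚ ≅ C^0(P₂(Aₙ)) ≅ ⊕_{i=0}^{n} S(-i)`. -/
theorem spline_module_free_with_exponents (n : ℕ) (hn : 1 ≤ n) :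
    ∃ b : Module.Basis (Fin (n + 1)) (S n) (splineModule n),
      ∀ k : Fin (n + 1), ∀ j : Fin (n + 1),
        ((b k : Fin (n + 1) → S n) j).IsHomogeneous (k : ℕ) := by
  classical
  let ℓ : (Fin (n+1) → S n) →ₗ[S n] splineModule n :=
    (Phi n).codRestrict (splineModule n) (Phi_mem n)
  have hℓ : ∀ a j, ((ℓ a : splineModule n) : Fin (n+1) → S n) j
      = ∑ k : Fin (n+1), a k * pts n j ^ (k : ℕ) := fun a j => rfl
  have hinj : Function.Injective ℓ := by
    rw [← LinearMap.ker_eq_bot, LinearMap.ker_eq_bot']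
    intro a ha
    have ha' : ∀ j, (∑ k : Fin (n+1), a k * pts n j ^ (k:ℕ)) = 0 := by
      intro j
      have := congrArg (fun x => ((x : splineModule n) : Fin (n+1) → S n) j) ha
      simpa [hℓ] using this
    set g : Polynomial (S n) := ∑ k : Fin (n+1), Polynomial.C (a k) * Polynomial.X ^ (k:ℕ)
      with hg
    have hgdeg : g.natDegree ≤ n := by
      refine Polynomial.natDegree_sum_le_of_forall_le _ _ fun k _ => ?_
      refine (Polynomial.natDegree_C_mul_le _ _).trans ?_
      simpa using Nat.lt_succ_iff.mp k.isLt
    have hgeval : ∀ j, g.eval (pts n j) = 0 := by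
      intro j
      rw [hg]
      simp only [Polynomial.eval_finset_sum, Polynomial.eval_mul, Polynomial.eval_C,
        Polynomial.eval_pow, Polynomial.eval_X]
      exact ha' j
    have hg0 : g = 0 := by
      refine Polynomial.eq_zero_of_natDegree_lt_card_of_eval_eq_zero g (pts_injective n)
        hgeval ?_
      simpa using Nat.lt_succ_of_le hgdeg
    funext k
    have hcoeff : g.coeff (k : ℕ) = a k := by
      rw [hg, Polynomial.finset_sum_coeff]
      rw [Finset.sum_eq_single k]
      · simp
      · intro b _ hbk
        have hne : (k : ℕ) ≠ (b : ℕ) := fun h => hbk (Fin.val_injective h.symm)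
        simp [Polynomial.coeff_C_mul, Polynomial.coeff_X_pow, hne]
      · simp
    rw [← hcoeff, hg0]
    simp
  have hsurj : Function.Surjective ℓ := by
    rintro ⟨f, hf1, hf2⟩
    have symm : ∀ i j : Fin (n+1), ((pts n i - pts n j) ∣ f i - f j) →
        ((pts n j - pts n i) ∣ f j - f i) := by
      intro i j h
      rw [show pts n j - pts n i = -(pts n i - pts n j) by ring,
        show f j - f i = -(f i - f j) by ring]
      exact neg_dvd.mpr (dvd_neg.mpr h)
    have h0s : ∀ t : Fin n, (pts n 0 - pts n t.succ) ∣ f 0 - f t.succ := by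
      intro t
      simp only [pts_zero, pts_succ, zero_sub]
      exact neg_dvd.mpr (hf1 t)
    have hss : ∀ s t : Fin n, (pts n s.succ - pts n t.succ) ∣ f s.succ - f t.succ := by
      intro s t
      rcases lt_trichotomy s t with h | h | h
      · simpa using hf2 s t h
      · subst h; simp
      · exact symm _ _ (by simpa using hf2 t s h)
    have key : ∀ i j : Fin (n+1), (pts n i - pts n j) ∣ f i - f j := by
      intro i j
      induction i using Fin.cases with
      | zero =>
        induction j using Fin.cases with
        | zero => simp
        | succ t => exact h0s t
      | succ s =>
        induction j using Fin.cases with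
        | zero => exact symm _ _ (h0s s)
        | succ t => exact hss s t
    obtain ⟨g, hgdeg, hgeval⟩ := newton_interp n (pts n) f (pts_H n) key
    refine ⟨fun k => g.coeff (k : ℕ), ?_⟩
    apply Subtype.ext
    funext j
    rw [hℓ]
    show (∑ k : Fin (n+1), g.coeff (k:ℕ) * pts n j ^ (k:ℕ)) = f j
    have := Polynomial.eval_eq_sum_range' (Nat.lt_succ_of_le hgdeg) (pts n j)
    rw [hgeval j] at this
    rw [Fin.sum_univ_eq_sum_range (fun k => g.coeff k * pts n j ^ k)]
    exact this.symm
  let e := LinearEquiv.ofBijective ℓ ⟨hinj, hsurj⟩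
  refine ⟨(Pi.basisFun (S n) (Fin (n+1))).map e, ?_⟩
  intro k j
  have hb : (((Pi.basisFun (S n) (Fin (n+1))).map e k : splineModule n) : Fin (n+1) → S n) j
      = pts n j ^ (k : ℕ) := by
    rw [Module.Basis.map_apply, Pi.basisFun_apply]
    show ((ℓ (Pi.single k 1) : splineModule n) : Fin (n+1) → S n) j = _
    rw [hℓ]
    rw [Finset.sum_eq_single k]
    · simp
    · intro b _ hbk; simp [Pi.single_apply, hbk]
    · simp
  rw [hb]
  induction j using Fin.cases with
  | zero =>
    simp only [pts_zero]
    rcases eq_or_ne (k : ℕ) 0 with h | h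
    · rw [h]; simpa [h] using isHomogeneous_one (Fin n) ℚ
    · rw [zero_pow h]; exact isHomogeneous_zero _ _ _
  | succ t =>
    simpa using (isHomogeneous_X ℚ t).pow (k : ℕ)
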